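/- Let R = ℂ[[u,v]], g ∈ R with j³g = α₁α₂α₃ a product of three pairwise non-proportional linear forms, and f ∈ R with 2-jet j²f = α₁·α for some linear form α. Then f belongs to the Jacobian ideal J_g = (g_u, g_v) if and only if α is proportional to the coefficient of du ∧ dv in dα₁ ∧ d(α₂α₃). -/

import Mathlib

open MvPowerSeries

/-- Formal partial derivative of a power series in two variables. -/
noncomputable def psDeriv (i : Fin 2) (g : MvPowerSeries (Fin 2) ℂ) :
    MvPowerSeries (Fin 2) ℂ :=
  fun s => ((s i : ℂ) + 1) * MvPowerSeries.coeff (s + Finsupp.single i 1) g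

/-- The linear form a·u + b·v as a power series. -/
noncomputable def linForm (a b : ℂ) : MvPowerSeries (Fin 2) ℂ :=
  a • (MvPowerSeries.X 0) + b • (MvPowerSeries.X 1)


open MvPowerSeries Polynomial Finset

noncomputable section
namespace D4aux

abbrev R2 := MvPowerSeries (Fin 2) ℂ

def fs (i j : ℕ) : Fin 2 →₀ ℕ := Finsupp.single 0 i + Finsupp.single 1 j

@[simp] lemma fs_0 (i j : ℕ) : fs i j 0 = i := by simp [fs]
@[simp] lemma fs_1 (i j : ℕ) : fs i j 1 = j := by simp [fs]

lemma fs_eq (s : Fin 2 →₀ ℕ) : fs (s 0) (s 1) = s := by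
  ext x
  fin_cases x <;> simp

lemma sum_eq (s : Fin 2 →₀ ℕ) : s.sum (fun _ n => n) = s 0 + s 1 := by
  rw [Finsupp.sum_fintype _ _ (fun _ => rfl), Fin.sum_univ_two]

/-- master coefficient-of-product expansion -/
lemma coeff_mul_expand (F G : R2) (s : Fin 2 →₀ ℕ) :
    coeff s (F * G) = ∑ i ∈ range (s 0 + 1), ∑ j ∈ range (s 1 + 1),
      coeff (fs i j) F * coeff (fs (s 0 - i) (s 1 - j)) G := by
  rw [MvPowerSeries.coeff_mul]
  rw [← Finset.sum_product']
  apply Finset.sum_nbij' (i := fun p => (p.1 0, p.1 1))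
    (j := fun p => (fs p.1 p.2, fs (s 0 - p.1) (s 1 - p.2)))
  · intro x hx
    rw [Finset.HasAntidiagonal.mem_antidiagonal] at hx
    have h0 : x.1 0 + x.2 0 = s 0 := by rw [← hx]; rfl
    have h1 : x.1 1 + x.2 1 = s 1 := by rw [← hx]; rfl
    simp only [Finset.mem_product, Finset.mem_range]
    omega
  · intro x hx
    simp only [Finset.mem_product, Finset.mem_range] at hx
    rw [Finset.HasAntidiagonal.mem_antidiagonal]
    have : x.1 + (s 0 - x.1) = s 0 := by omega
    have h2 : x.2 + (s 1 - x.2) = s 1 := by omega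
    calc fs x.1 x.2 + fs (s 0 - x.1) (s 1 - x.2)
        = fs (x.1 + (s 0 - x.1)) (x.2 + (s 1 - x.2)) := by
          ext t; fin_cases t <;> simp
      _ = s := by rw [this, h2, fs_eq]
  · intro x hx
    rw [Finset.HasAntidiagonal.mem_antidiagonal] at hx
    have h0 : x.1 0 + x.2 0 = s 0 := by rw [← hx]; rfl
    have h1 : x.1 1 + x.2 1 = s 1 := by rw [← hx]; rfl
    have e1 : fs (x.1 0) (x.1 1) = x.1 := fs_eq x.1
    have e2 : fs (s 0 - x.1 0) (s 1 - x.1 1) = x.2 := by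
      have : s 0 - x.1 0 = x.2 0 := by omega
      have h2 : s 1 - x.1 1 = x.2 1 := by omega
      rw [this, h2, fs_eq]
    exact Prod.ext e1 e2
  · intro x hx
    simp only [Finset.mem_product, Finset.mem_range] at hx
    simp
  · intro x hx
    rw [Finset.HasAntidiagonal.mem_antidiagonal] at hx
    have h0 : x.1 0 + x.2 0 = s 0 := by rw [← hx]; rfl
    have h1 : x.1 1 + x.2 1 = s 1 := by rw [← hx]; rfl
    have e1 : fs (x.1 0) (x.1 1) = x.1 := fs_eq x.1
    have e2 : fs (s 0 - x.1 0) (s 1 - x.1 1) = x.2 := by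
      have m0 : s 0 - x.1 0 = x.2 0 := by omega
      have m1 : s 1 - x.1 1 = x.2 1 := by omega
      rw [m0, m1, fs_eq]
    simp only [e1, e2]

/-- homogeneous series of degree d with dehomogenized coefficients φ (coeff k ↔ u^k v^(d-k)) -/
def hp (d : ℕ) (φ : Polynomial ℂ) : R2 :=
  fun s => if s 0 + s 1 = d then φ.coeff (s 0) else 0

lemma coeff_hp (d : ℕ) (φ : Polynomial ℂ) (s : Fin 2 →₀ ℕ) :
    coeff s (hp d φ) = if s 0 + s 1 = d then φ.coeff (s 0) else 0 :=
  rfl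

/-- coefficients vanish above degree d -/
def bdd (d : ℕ) (φ : Polynomial ℂ) : Prop := ∀ k, d < k → φ.coeff k = 0



lemma mul_ord (d e : ℕ) (φ : Polynomial ℂ) (G : R2)
    (hG0 : ∀ s : Fin 2 →₀ ℕ, s 0 + s 1 < e → coeff s G = 0)
    (s : Fin 2 →₀ ℕ) (hs : s 0 + s 1 < d + e) : coeff s (hp d φ * G) = 0 := by
  rw [coeff_mul_expand]
  apply Finset.sum_eq_zero
  intro i hi
  apply Finset.sum_eq_zero
  intro j hj
  simp only [Finset.mem_range] at hi hj
  rw [coeff_hp, fs_0, fs_1]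
  by_cases hd : i + j = d
  · rw [if_pos hd, hG0 _ (by simp only [fs_0, fs_1]; omega), mul_zero]
  · rw [if_neg hd, zero_mul]

lemma mul_top (d e : ℕ) (φ ψ : Polynomial ℂ) (G : R2) (hφ : bdd d φ) (hψ : bdd e ψ)
    (hG0 : ∀ s : Fin 2 →₀ ℕ, s 0 + s 1 < e → coeff s G = 0)
    (hGe : ∀ s : Fin 2 →₀ ℕ, s 0 + s 1 = e → coeff s G = ψ.coeff (s 0))
    (s : Fin 2 →₀ ℕ) (hs : s 0 + s 1 = d + e) :
    coeff s (hp d φ * G) = (φ * ψ).coeff (s 0) := by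
  rw [coeff_mul_expand, Polynomial.coeff_mul,
    Finset.Nat.sum_antidiagonal_eq_sum_range_succ_mk]
  apply Finset.sum_congr rfl
  intro i hi
  simp only [Finset.mem_range] at hi
  by_cases hc : i ≤ d ∧ d - i ≤ s 1
  · rw [Finset.sum_eq_single (d - i)]
    · rw [coeff_hp, fs_0, fs_1, if_pos (by omega)]
      rw [hGe _ (by simp only [fs_0, fs_1]; omega), fs_0]
    · intro j hj hne
      simp only [Finset.mem_range] at hj
      rw [coeff_hp, fs_0, fs_1, if_neg (by omega), zero_mul]
    · intro hmem
      exact absurd (Finset.mem_range.mpr (by omega)) hmem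
  · have hz : φ.coeff i * ψ.coeff (s 0 - i) = 0 := by
      rcases not_and_or.mp hc with h | h
      · rw [hφ i (by omega), zero_mul]
      · rw [hψ (s 0 - i) (by omega), mul_zero]
    rw [hz]
    apply Finset.sum_eq_zero
    intro j hj
    simp only [Finset.mem_range] at hj
    rw [coeff_hp, fs_0, fs_1, if_neg (by omega), zero_mul]

lemma hp_mul (d e : ℕ) (φ ψ : Polynomial ℂ) (hφ : bdd d φ) (hψ : bdd e ψ) :
    hp d φ * hp e ψ = hp (d + e) (φ * ψ) := by
  ext s
  have hG0 : ∀ s : Fin 2 →₀ ℕ, s 0 + s 1 < e → coeff s (hp e ψ) = 0 := by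
    intro s hs; rw [coeff_hp, if_neg (by omega)]
  rcases lt_trichotomy (s 0 + s 1) (d + e) with h | h | h
  · rw [mul_ord d e φ _ hG0 s h, coeff_hp, if_neg (by omega)]
  · rw [mul_top d e φ ψ _ hφ hψ hG0 (fun s hs => by rw [coeff_hp, if_pos hs]) s h,
      coeff_hp, if_pos h]
  · rw [coeff_hp, if_neg (by omega), coeff_mul_expand]
    apply Finset.sum_eq_zero
    intro i hi
    apply Finset.sum_eq_zero
    intro j hj
    simp only [Finset.mem_range] at hi hj
    simp only [coeff_hp, fs_0, fs_1]
    by_cases hd : i + j = d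
    · rw [if_pos hd, if_neg (by omega), mul_zero]
    · rw [if_neg hd, zero_mul]

lemma bdd_mul {d e : ℕ} {φ ψ : Polynomial ℂ} (hφ : bdd d φ) (hψ : bdd e ψ) :
    bdd (d + e) (φ * ψ) := by
  intro k hk
  rw [Polynomial.coeff_mul]
  apply Finset.sum_eq_zero
  intro x hx
  rw [Finset.HasAntidiagonal.mem_antidiagonal] at hx
  by_cases h : d < x.1
  · rw [hφ _ h, zero_mul]
  · rw [hψ x.2 (by omega), mul_zero]

lemma bdd_lin (a b : ℂ) : bdd 1 (Polynomial.C b + Polynomial.C a * Polynomial.X) := by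
  intro k hk
  rw [Polynomial.coeff_add, Polynomial.coeff_C, if_neg (by omega),
    Polynomial.coeff_C_mul, Polynomial.coeff_X, if_neg (by omega), mul_zero, add_zero]

lemma bdd_mono {d e : ℕ} (h : d ≤ e) {φ : Polynomial ℂ} (hφ : bdd d φ) : bdd e φ :=
  fun k hk => hφ k (by omega)

lemma bdd_add {d : ℕ} {φ ψ : Polynomial ℂ} (hφ : bdd d φ) (hψ : bdd d ψ) :
    bdd d (φ + ψ) := fun k hk => by
  rw [Polynomial.coeff_add, hφ k hk, hψ k hk, add_zero]

lemma bdd_C (x : ℂ) (d : ℕ) : bdd d (Polynomial.C x) := fun k hk => by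
  rw [Polynomial.coeff_C, if_neg (by omega)]

lemma bdd_X_mul {d : ℕ} {φ : Polynomial ℂ} (hφ : bdd d φ) :
    bdd (d + 1) (Polynomial.X * φ) := by
  intro k hk
  cases k with
  | zero => omega
  | succ n => rw [Polynomial.coeff_X_mul, hφ n (by omega)]

lemma bdd_divX {d : ℕ} {φ : Polynomial ℂ} (hφ : bdd (d + 1) φ) : bdd d φ.divX := by
  intro k hk
  rw [Polynomial.coeff_divX, hφ (k + 1) (by omega)]

lemma single01 : (Finsupp.single 0 1 : Fin 2 →₀ ℕ) = fs 1 0 := by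
  ext t; fin_cases t <;> simp
lemma single11 : (Finsupp.single 1 1 : Fin 2 →₀ ℕ) = fs 0 1 := by
  ext t; fin_cases t <;> simp

lemma linForm_eq (a b : ℂ) : linForm a b = hp 1 (Polynomial.C b + Polynomial.C a * Polynomial.X) := by
  ext s
  rw [coeff_hp]
  have hl : coeff s (linForm a b) =
      a * (if s = Finsupp.single 0 1 then 1 else 0) +
      b * (if s = Finsupp.single 1 1 then 1 else 0) := by
    simp [linForm, MvPowerSeries.coeff_X]
  rw [hl]
  have e0 : s = Finsupp.single 0 1 ↔ s 0 = 1 ∧ s 1 = 0 := by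
    rw [single01]
    constructor
    · intro h; rw [h]; simp
    · intro ⟨h1, h2⟩; rw [← fs_eq s, h1, h2]
  have e1 : s = Finsupp.single 1 1 ↔ s 0 = 0 ∧ s 1 = 1 := by
    rw [single11]
    constructor
    · intro h; rw [h]; simp
    · intro ⟨h1, h2⟩; rw [← fs_eq s, h1, h2]
  by_cases h0 : s 0 = 1 ∧ s 1 = 0
  · rw [if_pos (e0.mpr h0), if_neg (by rw [e1]; omega), if_pos (by omega), h0.1]
    simp
  · by_cases h1 : s 0 = 0 ∧ s 1 = 1
    · rw [if_pos (e1.mpr h1), if_neg (by rw [e0]; omega), if_pos (by omega), h1.1]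
      simp
    · rw [if_neg (by rw [e0]; omega), if_neg (by rw [e1]; omega)]
      by_cases hs : s 0 + s 1 = 1
      · rw [if_pos hs]
        have h2 : 1 < s 0 ∨ s 0 = 0 ∨ s 0 = 1 := by omega
        rcases h2 with h2 | h2 | h2
        · rw [(bdd_lin a b) (s 0) h2]; ring
        · exact absurd ⟨h2, by omega⟩ h1
        · exact absurd ⟨h2, by omega⟩ h0
      · rw [if_neg hs]; ring

lemma fs00 : fs 0 0 = (0 : Fin 2 →₀ ℕ) := by ext t; fin_cases t <;> simp

/-- product coefficient at the lowest order of G -/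
lemma coeff_mul_of_ord (A G : R2) (e : ℕ)
    (hG0 : ∀ s : Fin 2 →₀ ℕ, s 0 + s 1 < e → coeff s G = 0)
    (s : Fin 2 →₀ ℕ) (hs : s 0 + s 1 = e) :
    coeff s (A * G) = coeff 0 A * coeff s G := by
  rw [coeff_mul_expand]
  rw [Finset.sum_eq_single 0]
  · rw [Finset.sum_eq_single 0]
    · rw [fs00, Nat.sub_zero, Nat.sub_zero, fs_eq]
    · intro j hj hne
      simp only [Finset.mem_range] at hj
      rw [hG0 _ (by simp only [fs_0, fs_1]; omega), mul_zero]
    · intro hmem; exact absurd (Finset.mem_range.mpr (by omega)) hmem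
  · intro i hi hne
    apply Finset.sum_eq_zero
    intro j hj
    simp only [Finset.mem_range] at hi hj
    rw [hG0 _ (by simp only [fs_0, fs_1]; omega), mul_zero]
  · intro hmem; exact absurd (Finset.mem_range.mpr (by omega)) hmem

lemma mem_span_of_ord3 (gu gv : R2) (φp φq : Polynomial ℂ)
    (hbp : bdd 2 φp) (hbq : bdd 2 φq)
    (hgu0 : ∀ s : Fin 2 →₀ ℕ, s 0 + s 1 < 2 → coeff s gu = 0)
    (hgu2 : ∀ s : Fin 2 →₀ ℕ, s 0 + s 1 = 2 → coeff s gu = φp.coeff (s 0))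
    (hgv0 : ∀ s : Fin 2 →₀ ℕ, s 0 + s 1 < 2 → coeff s gv = 0)
    (hgv2 : ∀ s : Fin 2 →₀ ℕ, s 0 + s 1 = 2 → coeff s gv = φq.coeff (s 0))
    (HS : ∀ φ : Polynomial ℂ, bdd 3 φ →
      ∃ A B : Polynomial ℂ, bdd 1 A ∧ bdd 1 B ∧ A * φp + B * φq = φ)
    (h : R2) (hh : ∀ s : Fin 2 →₀ ℕ, s 0 + s 1 < 3 → coeff s h = 0) :
    h ∈ Ideal.span {gu, gv} := by
  have bdd_zero : ∀ d, bdd d (0 : Polynomial ℂ) := fun d k _ => Polynomial.coeff_zero k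
  have SOLVE : ∀ e : ℕ, ∀ φ : Polynomial ℂ, ∃ A B : Polynomial ℂ,
      bdd (e+1) A ∧ bdd (e+1) B ∧ (bdd (e+3) φ → A * φp + B * φq = φ) := by
    intro e
    induction e with
    | zero =>
      intro φ
      by_cases hφ : bdd 3 φ
      · obtain ⟨A, B, h1, h2, h3⟩ := HS φ hφ
        exact ⟨A, B, h1, h2, fun _ => h3⟩
      · exact ⟨0, 0, bdd_zero 1, bdd_zero 1, fun hc => absurd hc hφ⟩
    | succ e ih =>
      intro φ
      by_cases hφ : bdd (e+4) φ
      · obtain ⟨A1, B1, a1, b1, e1⟩ := ih φ.divX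
        obtain ⟨A0, B0, a0, b0, e0⟩ := HS (Polynomial.C (φ.coeff 0)) (bdd_C _ 3)
        refine ⟨Polynomial.X * A1 + A0, Polynomial.X * B1 + B0,
          bdd_add (bdd_X_mul a1) (bdd_mono (by omega) a0),
          bdd_add (bdd_X_mul b1) (bdd_mono (by omega) b0), fun _ => ?_⟩
        have hd : A1 * φp + B1 * φq = φ.divX := e1 (bdd_divX hφ)
        calc (Polynomial.X * A1 + A0) * φp + (Polynomial.X * B1 + B0) * φq
            = Polynomial.X * (A1 * φp + B1 * φq) + (A0 * φp + B0 * φq) := by ring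
          _ = φ := by rw [hd, e0, Polynomial.X_mul_divX_add]
      · exact ⟨0, 0, bdd_zero _, bdd_zero _, fun hc => absurd hc hφ⟩
  choose Af Bf hA hB hEq using SOLVE
  classical
  set Φ : ℕ → R2 → Polynomial ℂ :=
    fun n r => ∑ k ∈ Finset.range (n+4),
      Polynomial.C (coeff (fs k (n+3-k)) r) * Polynomial.X ^ k with hΦ
  have Φcoeff : ∀ n (r : R2) (k : ℕ),
      (Φ n r).coeff k = if k ≤ n+3 then coeff (fs k (n+3-k)) r else 0 := by
    intro n r k
    rw [hΦ]
    simp only [Polynomial.finset_sum_coeff, Polynomial.coeff_C_mul,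
      Polynomial.coeff_X_pow]
    by_cases hk : k ≤ n+3
    · rw [if_pos hk, Finset.sum_eq_single k]
      · rw [if_pos rfl, mul_one]
      · intro m hm hne; rw [if_neg (fun hc => hne hc.symm), mul_zero]
      · intro hmem; exact absurd (Finset.mem_range.mpr (by omega)) hmem
    · rw [if_neg hk]
      apply Finset.sum_eq_zero
      intro m hm
      simp only [Finset.mem_range] at hm
      rw [if_neg (by omega), mul_zero]
  have bddΦ : ∀ n (r : R2), bdd (n+3) (Φ n r) := fun n r k hk => by
    rw [Φcoeff, if_neg (by omega)]
  set rem : ℕ → R2 := fun n => Nat.rec (motive := fun _ => R2) h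
    (fun n r => r - hp (n+1) (Af n (Φ n r)) * gu - hp (n+1) (Bf n (Φ n r)) * gv) n
    with hrem
  have rem0 : rem 0 = h := rfl
  have remS : ∀ n, rem (n+1) =
      rem n - hp (n+1) (Af n (Φ n (rem n))) * gu - hp (n+1) (Bf n (Φ n (rem n))) * gv :=
    fun n => rfl
  let An : ℕ → Polynomial ℂ := fun n => Af n (Φ n (rem n))
  let Bn : ℕ → Polynomial ℂ := fun n => Bf n (Φ n (rem n))
  have hAnd : ∀ n, An n = Af n (Φ n (rem n)) := fun n => rfl
  have hBnd : ∀ n, Bn n = Bf n (Φ n (rem n)) := fun n => rfl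
  have INV : ∀ n, ∀ s : Fin 2 →₀ ℕ, s 0 + s 1 < n + 3 → coeff s (rem n) = 0 := by
    intro n
    induction n with
    | zero => exact hh
    | succ n ih =>
      intro s hs
      rw [remS, map_sub, map_sub]
      by_cases hlt : s 0 + s 1 < n + 3
      · rw [ih s hlt, mul_ord (n+1) 2 _ gu hgu0 s (by omega),
          mul_ord (n+1) 2 _ gv hgv0 s (by omega)]
        ring
      · have hdeg : s 0 + s 1 = n + 3 := by omega
        rw [mul_top (n+1) 2 _ φp gu (hA n _) hbp hgu0 hgu2 s (by omega),
          mul_top (n+1) 2 _ φq gv (hB n _) hbq hgv0 hgv2 s (by omega)]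
        have hc : coeff s (rem n) = (Φ n (rem n)).coeff (s 0) := by
          rw [Φcoeff, if_pos (by omega)]
          congr 1
          have h31 : n + 3 - s 0 = s 1 := by omega
          rw [h31, fs_eq]
        have heq2 : (Af n (Φ n (rem n)) * φp).coeff (s 0) +
            (Bf n (Φ n (rem n)) * φq).coeff (s 0) = (Φ n (rem n)).coeff (s 0) := by
          rw [← Polynomial.coeff_add, hEq n _ (bddΦ n (rem n))]
        rw [hc, ← heq2]
        ring
  have TEL : ∀ N, rem N = h - ∑ n ∈ Finset.range N,
      (hp (n+1) (An n) * gu + hp (n+1) (Bn n) * gv) := by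
    intro N
    induction N with
    | zero => rw [rem0]; simp
    | succ N ih =>
      rw [Finset.sum_range_succ, remS]
      nth_rewrite 1 [ih]
      simp only [hAnd, hBnd]
      try ring
  set AS : R2 := (fun s => if s 0 + s 1 = 0 then 0
    else (An (s 0 + s 1 - 1)).coeff (s 0) : (Fin 2 →₀ ℕ) → ℂ) with hAS
  set BS : R2 := (fun s => if s 0 + s 1 = 0 then 0
    else (Bn (s 0 + s 1 - 1)).coeff (s 0) : (Fin 2 →₀ ℕ) → ℂ) with hBS
  have coeffAS : ∀ s : Fin 2 →₀ ℕ, coeff s AS =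
      if s 0 + s 1 = 0 then 0 else (An (s 0 + s 1 - 1)).coeff (s 0) := fun s => rfl
  have coeffBS : ∀ s : Fin 2 →₀ ℕ, coeff s BS =
      if s 0 + s 1 = 0 then 0 else (Bn (s 0 + s 1 - 1)).coeff (s 0) := fun s => rfl
  have KEY : ∀ (CS : R2) (Cn : ℕ → Polynomial ℂ) (G : R2),
      (∀ s : Fin 2 →₀ ℕ, coeff s CS =
        if s 0 + s 1 = 0 then 0 else (Cn (s 0 + s 1 - 1)).coeff (s 0)) →
      ∀ s : Fin 2 →₀ ℕ, coeff s (CS * G) =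
        ∑ n ∈ Finset.range (s 0 + s 1 + 1), coeff s (hp (n+1) (Cn n) * G) := by
    intro CS Cn G hCS s
    symm
    have hexp : ∀ n, coeff s (hp (n+1) (Cn n) * G) =
        ∑ i ∈ Finset.range (s 0 + 1), ∑ j ∈ Finset.range (s 1 + 1),
          coeff (fs i j) (hp (n+1) (Cn n)) * coeff (fs (s 0 - i) (s 1 - j)) G :=
      fun n => coeff_mul_expand _ _ _
    simp_rw [hexp]
    rw [Finset.sum_comm, coeff_mul_expand]
    apply Finset.sum_congr rfl
    intro i hi
    rw [Finset.sum_comm]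
    apply Finset.sum_congr rfl
    intro j hj
    rw [← Finset.sum_mul]
    congr 1
    rw [hCS]
    simp only [coeff_hp, fs_0, fs_1]
    simp only [Finset.mem_range] at hi hj
    by_cases h0 : i + j = 0
    · rw [if_pos h0]
      apply Finset.sum_eq_zero
      intro n _
      rw [if_neg (by omega)]
    · rw [if_neg h0]
      rw [Finset.sum_eq_single (i+j-1)]
      · rw [if_pos (by omega)]
      · intro n hn hne; rw [if_neg (by omega)]
      · intro hmem; exact absurd (Finset.mem_range.mpr (by omega)) hmem
  have FIN : h = AS * gu + BS * gv := by
    ext s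
    have h0 : coeff s (rem (s 0 + s 1 + 1)) = 0 := INV (s 0 + s 1 + 1) s (by omega)
    rw [TEL (s 0 + s 1 + 1), map_sub, sub_eq_zero] at h0
    rw [h0, map_add, KEY AS An gu coeffAS s, KEY BS Bn gv coeffBS s, map_sum,
      ← Finset.sum_add_distrib]
    apply Finset.sum_congr rfl
    intro n _
    rw [map_add]
  exact Ideal.mem_span_pair.mpr ⟨AS, BS, FIN.symm⟩

lemma solve3 (p0 p1 p2 q0 q1 q2 : ℂ)
    (hdet : Matrix.det !![p0,0,q0,0; p1,p0,q1,q0; p2,p1,q2,q1; (0:ℂ),p2,0,q2] ≠ 0) :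
    ∀ φ : Polynomial ℂ, bdd 3 φ → ∃ A B : Polynomial ℂ, bdd 1 A ∧ bdd 1 B ∧
      A * (Polynomial.C p0 + Polynomial.C p1 * Polynomial.X + Polynomial.C p2 * Polynomial.X^2)
        + B * (Polynomial.C q0 + Polynomial.C q1 * Polynomial.X + Polynomial.C q2 * Polynomial.X^2) = φ := by
  intro φ hφ
  set M : Matrix (Fin 4) (Fin 4) ℂ :=
    !![p0,0,q0,0; p1,p0,q1,q0; p2,p1,q2,q1; (0:ℂ),p2,0,q2] with hM
  have hu : IsUnit M.det := isUnit_iff_ne_zero.mpr hdet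
  set y : Fin 4 → ℂ := ![φ.coeff 0, φ.coeff 1, φ.coeff 2, φ.coeff 3] with hy
  set x : Fin 4 → ℂ := M⁻¹.mulVec y with hx
  have hMx : M.mulVec x = y := by
    rw [hx, Matrix.mulVec_mulVec, Matrix.mul_nonsing_inv _ hu, Matrix.one_mulVec]
  have e0 := congrFun hMx 0
  have e1 := congrFun hMx 1
  have e2 := congrFun hMx 2
  have e3 := congrFun hMx 3
  simp only [hM, hy, Matrix.mulVec, dotProduct, Fin.sum_univ_four,
    Matrix.cons_val', Matrix.cons_val_zero, Matrix.cons_val_one, Matrix.head_cons,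
    Matrix.empty_val', Matrix.cons_val_fin_one, Matrix.head_fin_const,
    Matrix.cons_val_two, Matrix.cons_val_three, Matrix.tail_cons, Matrix.of_apply,
    Matrix.cons_val_succ] at e0 e1 e2 e3
  refine ⟨Polynomial.C (x 0) + Polynomial.C (x 1) * Polynomial.X, Polynomial.C (x 2) + Polynomial.C (x 3) * Polynomial.X,
    bdd_lin (x 1) (x 0), bdd_lin (x 3) (x 2), ?_⟩
  have expand : ∀ u v r0 r1 r2 : ℂ,
      (Polynomial.C u + Polynomial.C v * Polynomial.X) * (Polynomial.C r0 + Polynomial.C r1 * Polynomial.X + Polynomial.C r2 * Polynomial.X^2)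
      = Polynomial.C (u*r0) + Polynomial.C (u*r1 + v*r0) * Polynomial.X + Polynomial.C (u*r2 + v*r1) * Polynomial.X^2
        + Polynomial.C (v*r2) * Polynomial.X^3 := by
    intros u v r0 r1 r2
    simp only [C_add, C_mul]
    ring
  rw [expand, expand]
  ext k
  simp only [Polynomial.coeff_add, Polynomial.coeff_C_mul, Polynomial.coeff_C,
    Polynomial.coeff_X, Polynomial.coeff_X_pow]
  by_cases h0 : k = 0
  · subst h0; norm_num; linear_combination e0
  · by_cases h1 : k = 1
    · subst h1; norm_num; linear_combination e1
    · by_cases h2 : k = 2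
      · subst h2; norm_num; linear_combination e2
      · by_cases h3 : k = 3
        · subst h3; norm_num; linear_combination e3
        · rw [hφ k (by omega)]
          simp [h0, h1, h2, h3, show (1:ℕ) ≠ k from fun hc => h1 hc.symm]
lemma det_fin_four' (a00 a01 a02 a03 a10 a11 a12 a13 a20 a21 a22 a23 a30 a31 a32 a33 : ℂ) :
    Matrix.det !![a00,a01,a02,a03; a10,a11,a12,a13; a20,a21,a22,a23; a30,a31,a32,a33] =
      a00*(a11*(a22*a33-a23*a32) - a12*(a21*a33-a23*a31) + a13*(a21*a32-a22*a31))
    - a01*(a10*(a22*a33-a23*a32) - a12*(a20*a33-a23*a30) + a13*(a20*a32-a22*a30))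
    + a02*(a10*(a21*a33-a23*a31) - a11*(a20*a33-a23*a30) + a13*(a20*a31-a21*a30))
    - a03*(a10*(a21*a32-a22*a31) - a11*(a20*a32-a22*a30) + a12*(a20*a31-a21*a30)) := by
  set M : Matrix (Fin 4) (Fin 4) ℂ :=
    !![a00,a01,a02,a03; a10,a11,a12,a13; a20,a21,a22,a23; a30,a31,a32,a33] with hM
  have s0 : M.submatrix Fin.succ (Fin.succAbove 0) = !![a11,a12,a13; a21,a22,a23; a31,a32,a33] := by
    ext i k; fin_cases i <;> fin_cases k <;> rfl
  have s1 : M.submatrix Fin.succ (Fin.succAbove 1) = !![a10,a12,a13; a20,a22,a23; a30,a32,a33] := by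
    ext i k; fin_cases i <;> fin_cases k <;> rfl
  have s2 : M.submatrix Fin.succ (Fin.succAbove 2) = !![a10,a11,a13; a20,a21,a23; a30,a31,a33] := by
    ext i k; fin_cases i <;> fin_cases k <;> rfl
  have s3 : M.submatrix Fin.succ (Fin.succAbove 3) = !![a10,a11,a12; a20,a21,a22; a30,a31,a32] := by
    ext i k; fin_cases i <;> fin_cases k <;> rfl
  rw [Matrix.det_succ_row_zero, Fin.sum_univ_four, s0, s1, s2, s3,
    Matrix.det_fin_three, Matrix.det_fin_three, Matrix.det_fin_three, Matrix.det_fin_three]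
  have e : ∀ i j : Fin 4, M i j = !![a00,a01,a02,a03; a10,a11,a12,a13; a20,a21,a22,a23; a30,a31,a32,a33] i j := fun i j => rfl
  simp only [hM, Matrix.cons_val', Matrix.cons_val_zero, Matrix.cons_val_one, Matrix.head_cons,
    Matrix.cons_val_two, Matrix.cons_val_three, Matrix.tail_cons, Matrix.empty_val',
    Matrix.cons_val_fin_one, Matrix.head_fin_const, Matrix.of_apply]
  have v0 : ((0 : Fin 4) : ℕ) = 0 := rfl
  have v1 : ((1 : Fin 4) : ℕ) = 1 := rfl
  have v2 : ((2 : Fin 4) : ℕ) = 2 := rfl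
  have v3 : ((3 : Fin 4) : ℕ) = 3 := rfl
  rw [v0, v1, v2, v3]
  norm_num
  ring

set_option maxHeartbeats 800000 in
lemma detcalc (a0 a1 a2 b0 b1 b2 : ℂ) :
    Matrix.det !![a0*b1*b2 + b0*a1*b2 + b0*b1*a2, 0, 3*(b0*b1*b2), 0;
      2*(a0*a1*b2 + a0*b1*a2 + b0*a1*a2), a0*b1*b2 + b0*a1*b2 + b0*b1*a2,
        2*(a0*b1*b2 + b0*a1*b2 + b0*b1*a2), 3*(b0*b1*b2);
      3*(a0*a1*a2), 2*(a0*a1*b2 + a0*b1*a2 + b0*a1*a2),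
        a0*a1*b2 + a0*b1*a2 + b0*a1*a2, 2*(a0*b1*b2 + b0*a1*b2 + b0*b1*a2);
      (0:ℂ), 3*(a0*a1*a2), 0, a0*a1*b2 + a0*b1*a2 + b0*a1*a2] =
    -3 * ((a0*b1-a1*b0)*(a0*b2-a2*b0)*(a1*b2-a2*b1))^2 := by
  rw [det_fin_four']
  ring


lemma linForm_coeff10 (x y : ℂ) : coeff (fs 1 0) (linForm x y) = x := by
  rw [linForm_eq, coeff_hp]
  simp [Polynomial.coeff_add, Polynomial.coeff_C, Polynomial.coeff_C_mul, Polynomial.coeff_X]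

lemma linForm_coeff01 (x y : ℂ) : coeff (fs 0 1) (linForm x y) = y := by
  rw [linForm_eq, coeff_hp]
  simp [Polynomial.coeff_add, Polynomial.coeff_C, Polynomial.coeff_C_mul, Polynomial.coeff_X]

lemma comb (c A0 B0 A1 B1 A2 B2 : ℂ) :
    c • (A0 • (B2 • linForm A1 B1 + B1 • linForm A2 B2)
       - B0 • (A2 • linForm A1 B1 + A1 • linForm A2 B2))
    = linForm (c*(A0*(B2*A1+B1*A2) - B0*(A2*A1+A1*A2)))
              (c*(A0*(B2*B1+B1*B2) - B0*(A2*B1+A1*B2))) := by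
  simp only [linForm, smul_add, smul_sub, smul_smul]
  module

lemma cubic_eq (a0 b0 a1 b1 a2 b2 : ℂ) :
    linForm a0 b0 * linForm a1 b1 * linForm a2 b2 =
    hp 3 (Polynomial.C (b0*b1*b2) + Polynomial.C (a0*b1*b2 + b0*a1*b2 + b0*b1*a2) * Polynomial.X
      + Polynomial.C (a0*a1*b2 + a0*b1*a2 + b0*a1*a2) * Polynomial.X^2
      + Polynomial.C (a0*a1*a2) * Polynomial.X^3) := by
  rw [linForm_eq a0 b0, linForm_eq a1 b1, linForm_eq a2 b2,
    hp_mul 1 1 _ _ (bdd_lin a0 b0) (bdd_lin a1 b1),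
    hp_mul 2 1 _ _ (bdd_mul (bdd_lin a0 b0) (bdd_lin a1 b1)) (bdd_lin a2 b2)]
  have h3 : (2:ℕ) + 1 = 3 := rfl
  rw [h3]
  congr 1
  simp only [C_add, C_mul]
  ring

lemma quad_eq (a0 b0 p q : ℂ) :
    linForm a0 b0 * linForm p q =
    hp 2 (Polynomial.C (b0*q) + Polynomial.C (b0*p + a0*q) * Polynomial.X + Polynomial.C (a0*p) * Polynomial.X^2) := by
  rw [linForm_eq a0 b0, linForm_eq p q, hp_mul 1 1 _ _ (bdd_lin a0 b0) (bdd_lin p q)]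
  have h2 : (1:ℕ) + 1 = 2 := rfl
  rw [h2]
  congr 1
  simp only [C_add, C_mul]
  ring

lemma coeff_psDeriv (i : Fin 2) (g : MvPowerSeries (Fin 2) ℂ) (s : Fin 2 →₀ ℕ) :
    coeff s (psDeriv i g) = ((s i : ℂ) + 1) * coeff (s + Finsupp.single i 1) g := rfl

lemma add_single0a (s : Fin 2 →₀ ℕ) :
    ((s + Finsupp.single (0 : Fin 2) 1 : Fin 2 →₀ ℕ)) 0 = s 0 + 1 := by simp
lemma add_single0b (s : Fin 2 →₀ ℕ) :
    ((s + Finsupp.single (0 : Fin 2) 1 : Fin 2 →₀ ℕ)) 1 = s 1 := by simp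
lemma add_single1a (s : Fin 2 →₀ ℕ) :
    ((s + Finsupp.single (1 : Fin 2) 1 : Fin 2 →₀ ℕ)) 0 = s 0 := by simp
lemma add_single1b (s : Fin 2 →₀ ℕ) :
    ((s + Finsupp.single (1 : Fin 2) 1 : Fin 2 →₀ ℕ)) 1 = s 1 + 1 := by simp

lemma coeff_quad (k0 k1 k2 : ℂ) (n : ℕ) :
    (Polynomial.C k0 + Polynomial.C k1 * Polynomial.X
      + Polynomial.C k2 * Polynomial.X^2).coeff n =
    if n = 0 then k0 else if n = 1 then k1 else if n = 2 then k2 else 0 := by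
  simp only [Polynomial.coeff_add, Polynomial.coeff_C, Polynomial.coeff_C_mul,
    Polynomial.coeff_X, Polynomial.coeff_X_pow]
  by_cases h0 : n = 0
  · subst h0; norm_num
  · by_cases h1 : n = 1
    · subst h1; norm_num
    · by_cases h2 : n = 2
      · subst h2; norm_num
      · simp [h0, h1, h2, show (1:ℕ) ≠ n from fun hc => h1 hc.symm]

lemma coeff_cubic (k0 k1 k2 k3 : ℂ) (n : ℕ) :
    (Polynomial.C k0 + Polynomial.C k1 * Polynomial.X
      + Polynomial.C k2 * Polynomial.X^2 + Polynomial.C k3 * Polynomial.X^3).coeff n =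
    if n = 0 then k0 else if n = 1 then k1 else if n = 2 then k2
      else if n = 3 then k3 else 0 := by
  simp only [Polynomial.coeff_add, Polynomial.coeff_C, Polynomial.coeff_C_mul,
    Polynomial.coeff_X, Polynomial.coeff_X_pow]
  by_cases h0 : n = 0
  · subst h0; norm_num
  · by_cases h1 : n = 1
    · subst h1; norm_num
    · by_cases h2 : n = 2
      · subst h2; norm_num
      · by_cases h3 : n = 3
        · subst h3; norm_num
        · simp [h0, h1, h2, h3, show (1:ℕ) ≠ n from fun hc => h1 hc.symm]

end D4aux

open D4aux in
theorem mem_jacobian_iff_tangent_proportional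
    (g f : MvPowerSeries (Fin 2) ℂ) (a b : Fin 3 → ℂ) (p q : ℂ)
    (hne : ∀ i, (a i, b i) ≠ (0, 0))
    (hprop : ∀ i j : Fin 3, i ≠ j → a i * b j - a j * b i ≠ 0)
    (hglow : ∀ s : Fin 2 →₀ ℕ, s.sum (fun _ n => n) < 3 → MvPowerSeries.coeff s g = 0)
    (hgjet : ∀ s : Fin 2 →₀ ℕ, s.sum (fun _ n => n) = 3 →
      MvPowerSeries.coeff s g =
      MvPowerSeries.coeff s (linForm (a 0) (b 0) * linForm (a 1) (b 1) * linForm (a 2) (b 2)))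
    (hflow : ∀ s : Fin 2 →₀ ℕ, s.sum (fun _ n => n) < 2 → MvPowerSeries.coeff s f = 0)
    (hfjet : ∀ s : Fin 2 →₀ ℕ, s.sum (fun _ n => n) = 2 →
      MvPowerSeries.coeff s f =
      MvPowerSeries.coeff s (linForm (a 0) (b 0) * linForm p q)) :
    f ∈ Ideal.span {psDeriv 0 g, psDeriv 1 g} ↔
      ∃ c : ℂ, linForm p q =
        c • (a 0 • (b 2 • linForm (a 1) (b 1) + b 1 • linForm (a 2) (b 2))
             - b 0 • (a 2 • linForm (a 1) (b 1) + a 1 • linForm (a 2) (b 2))) := by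
  classical
  have hcubic : ∀ s : Fin 2 →₀ ℕ, s 0 + s 1 = 3 →
      MvPowerSeries.coeff s g = (Polynomial.C (b 0*b 1*b 2) + Polynomial.C (a 0*b 1*b 2 + b 0*a 1*b 2 + b 0*b 1*a 2) * Polynomial.X + Polynomial.C (a 0*a 1*b 2 + a 0*b 1*a 2 + b 0*a 1*a 2) * Polynomial.X^2 + Polynomial.C (a 0*a 1*a 2) * Polynomial.X^3 : Polynomial ℂ).coeff (s 0) := by
    intro s hs
    rw [hgjet s (by rw [sum_eq]; exact hs), cubic_eq, coeff_hp, if_pos hs]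
  have hgu0 : ∀ s : Fin 2 →₀ ℕ, s 0 + s 1 < 2 → MvPowerSeries.coeff s (psDeriv 0 g) = 0 := by
    intro s hs
    rw [coeff_psDeriv, hglow _ (by rw [sum_eq, add_single0a, add_single0b]; omega), mul_zero]
  have hgv0 : ∀ s : Fin 2 →₀ ℕ, s 0 + s 1 < 2 → MvPowerSeries.coeff s (psDeriv 1 g) = 0 := by
    intro s hs
    rw [coeff_psDeriv, hglow _ (by rw [sum_eq, add_single1a, add_single1b]; omega), mul_zero]
  have hgu2 : ∀ s : Fin 2 →₀ ℕ, s 0 + s 1 = 2 → MvPowerSeries.coeff s (psDeriv 0 g) =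
      (Polynomial.C (a 0*b 1*b 2 + b 0*a 1*b 2 + b 0*b 1*a 2) + Polynomial.C (2*(a 0*a 1*b 2 + a 0*b 1*a 2 + b 0*a 1*a 2)) * Polynomial.X + Polynomial.C (3*(a 0*a 1*a 2)) * Polynomial.X^2 : Polynomial ℂ).coeff (s 0) := by
    intro s hs
    rw [coeff_psDeriv,
      hcubic _ (by rw [add_single0a, add_single0b]; omega), add_single0a,
      coeff_cubic, coeff_quad]
    rcases (by omega : s 0 = 0 ∨ s 0 = 1 ∨ s 0 = 2) with h0 | h0 | h0 <;>
      rw [h0] <;> norm_num <;> ring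
  have hgv2 : ∀ s : Fin 2 →₀ ℕ, s 0 + s 1 = 2 → MvPowerSeries.coeff s (psDeriv 1 g) =
      (Polynomial.C (3*(b 0*b 1*b 2)) + Polynomial.C (2*(a 0*b 1*b 2 + b 0*a 1*b 2 + b 0*b 1*a 2)) * Polynomial.X + Polynomial.C (a 0*a 1*b 2 + a 0*b 1*a 2 + b 0*a 1*a 2) * Polynomial.X^2 : Polynomial ℂ).coeff (s 0) := by
    intro s hs
    rw [coeff_psDeriv,
      hcubic _ (by rw [add_single1a, add_single1b]; omega), add_single1a,
      coeff_cubic, coeff_quad]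
    rcases (by omega : s 0 = 0 ∧ s 1 = 2 ∨ s 0 = 1 ∧ s 1 = 1 ∨ s 0 = 2 ∧ s 1 = 0) with
      ⟨h0, h1⟩ | ⟨h0, h1⟩ | ⟨h0, h1⟩ <;>
      rw [h0, h1] <;> norm_num <;> ring
  have hf2 : ∀ s : Fin 2 →₀ ℕ, s 0 + s 1 = 2 → MvPowerSeries.coeff s f =
      (Polynomial.C (b 0*q) + Polynomial.C (b 0*p + a 0*q) * Polynomial.X + Polynomial.C (a 0*p) * Polynomial.X^2 : Polynomial ℂ).coeff (s 0) := by
    intro s hs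
    rw [hfjet s (by rw [sum_eq]; exact hs), quad_eq, coeff_hp, if_pos hs]
  have hdet : Matrix.det !![a 0*b 1*b 2 + b 0*a 1*b 2 + b 0*b 1*a 2,0,3*(b 0*b 1*b 2),0;
      2*(a 0*a 1*b 2 + a 0*b 1*a 2 + b 0*a 1*a 2),a 0*b 1*b 2 + b 0*a 1*b 2 + b 0*b 1*a 2,2*(a 0*b 1*b 2 + b 0*a 1*b 2 + b 0*b 1*a 2),3*(b 0*b 1*b 2);
      3*(a 0*a 1*a 2),2*(a 0*a 1*b 2 + a 0*b 1*a 2 + b 0*a 1*a 2),a 0*a 1*b 2 + a 0*b 1*a 2 + b 0*a 1*a 2,2*(a 0*b 1*b 2 + b 0*a 1*b 2 + b 0*b 1*a 2);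
      (0:ℂ),3*(a 0*a 1*a 2),0,a 0*a 1*b 2 + a 0*b 1*a 2 + b 0*a 1*a 2] ≠ 0 := by
    rw [detcalc (a 0) (a 1) (a 2) (b 0) (b 1) (b 2)]
    have d01 := hprop 0 1 (by decide)
    have d02 := hprop 0 2 (by decide)
    have d12 := hprop 1 2 (by decide)
    exact mul_ne_zero (by norm_num) (pow_ne_zero _ (mul_ne_zero (mul_ne_zero d01 d02) d12))
  have HS := solve3 (a 0*b 1*b 2 + b 0*a 1*b 2 + b 0*b 1*a 2) (2*(a 0*a 1*b 2 + a 0*b 1*a 2 + b 0*a 1*a 2)) (3*(a 0*a 1*a 2)) (3*(b 0*b 1*b 2)) (2*(a 0*b 1*b 2 + b 0*a 1*b 2 + b 0*b 1*a 2)) (a 0*a 1*b 2 + a 0*b 1*a 2 + b 0*a 1*a 2) hdet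
  have bddp : bdd 2 (Polynomial.C (a 0*b 1*b 2 + b 0*a 1*b 2 + b 0*b 1*a 2) + Polynomial.C (2*(a 0*a 1*b 2 + a 0*b 1*a 2 + b 0*a 1*a 2)) * Polynomial.X + Polynomial.C (3*(a 0*a 1*a 2)) * Polynomial.X^2 : Polynomial ℂ) := by
    intro k hk
    rw [coeff_quad, if_neg (by omega), if_neg (by omega), if_neg (by omega)]
  have bddq : bdd 2 (Polynomial.C (3*(b 0*b 1*b 2)) + Polynomial.C (2*(a 0*b 1*b 2 + b 0*a 1*b 2 + b 0*b 1*a 2)) * Polynomial.X + Polynomial.C (a 0*a 1*b 2 + a 0*b 1*a 2 + b 0*a 1*a 2) * Polynomial.X^2 : Polynomial ℂ) := by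
    intro k hk
    rw [coeff_quad, if_neg (by omega), if_neg (by omega), if_neg (by omega)]
  have hmain := mem_span_of_ord3 (psDeriv 0 g) (psDeriv 1 g) _ _ bddp bddq hgu0 hgu2 hgv0 hgv2 HS
  constructor
  · -- forward direction
    intro hf
    obtain ⟨A, B, hAB⟩ := Ideal.mem_span_pair.mp hf
    have E : ∀ s : Fin 2 →₀ ℕ, s 0 + s 1 = 2 →
        MvPowerSeries.coeff 0 A * (Polynomial.C (a 0*b 1*b 2 + b 0*a 1*b 2 + b 0*b 1*a 2) + Polynomial.C (2*(a 0*a 1*b 2 + a 0*b 1*a 2 + b 0*a 1*a 2)) * Polynomial.X + Polynomial.C (3*(a 0*a 1*a 2)) * Polynomial.X^2 : Polynomial ℂ).coeff (s 0)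
        + MvPowerSeries.coeff 0 B * (Polynomial.C (3*(b 0*b 1*b 2)) + Polynomial.C (2*(a 0*b 1*b 2 + b 0*a 1*b 2 + b 0*b 1*a 2)) * Polynomial.X + Polynomial.C (a 0*a 1*b 2 + a 0*b 1*a 2 + b 0*a 1*a 2) * Polynomial.X^2 : Polynomial ℂ).coeff (s 0)
        = (Polynomial.C (b 0*q) + Polynomial.C (b 0*p + a 0*q) * Polynomial.X + Polynomial.C (a 0*p) * Polynomial.X^2 : Polynomial ℂ).coeff (s 0) := by
      intro s hs
      have h1 : MvPowerSeries.coeff s (A * psDeriv 0 g + B * psDeriv 1 g)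
          = MvPowerSeries.coeff s f := by rw [hAB]
      rw [map_add, coeff_mul_of_ord A _ 2 hgu0 s hs, coeff_mul_of_ord B _ 2 hgv0 s hs,
        hgu2 s hs, hgv2 s hs, hf2 s hs] at h1
      exact h1
    have E0 := E (fs 0 2) (by simp)
    have E1 := E (fs 1 1) (by simp)
    have E2 := E (fs 2 0) (by simp)
    rw [fs_0] at E0 E1 E2
    rw [coeff_quad, coeff_quad, coeff_quad] at E0 E1 E2
    norm_num at E0 E1 E2
    set A0 := (MvPowerSeries.constantCoeff) A with hA0def
    set B0 := (MvPowerSeries.constantCoeff) B with hB0def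
    have hKne : (a 0*b 1 - a 1*b 0) * (a 0*b 2 - a 2*b 0) ≠ 0 :=
      mul_ne_zero (hprop 0 1 (by decide)) (hprop 0 2 (by decide))
    have hK : (A0 * a 0 + B0 * b 0) * ((a 0*b 1 - a 1*b 0) * (a 0*b 2 - a 2*b 0)) = 0 := by
      linear_combination (a 0^2) * E0 - (a 0*b 0) * E1 + (b 0^2) * E2
    have h4 : A0 * a 0 + B0 * b 0 = 0 := by
      rcases mul_eq_zero.mp hK with h | h
      · exact h
      · exact absurd h hKne
    have hab : a 0 ≠ 0 ∨ b 0 ≠ 0 := by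
      by_contra hcon
      push_neg at hcon
      exact hne 0 (by rw [hcon.1, hcon.2])
    obtain ⟨t, hA0, hB0⟩ : ∃ t : ℂ, A0 = t * b 0 ∧ B0 = -(t * a 0) := by
      rcases em (b 0 = 0) with hb | hb
      · have ha : a 0 ≠ 0 := by
          rcases hab with h | h
          · exact h
          · exact absurd hb h
        refine ⟨-(B0 / a 0), ?_, ?_⟩
        · rw [hb, mul_zero]
          have hz : A0 * a 0 = 0 := by rw [hb] at h4; linear_combination h4
          exact (mul_eq_zero.mp hz).resolve_right ha
        · field_simp
      · refine ⟨A0 / b 0, by field_simp, ?_⟩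
        field_simp
        linear_combination h4
    rw [hA0, hB0] at E0 E1 E2
    have hX : a 0 * (p + t * (a 0*(b 2*a 1 + b 1*a 2) - b 0*(a 2*a 1 + a 1*a 2))) = 0 := by linear_combination -E2
    have hY : b 0 * (q + t * (a 0*(b 2*b 1 + b 1*b 2) - b 0*(a 2*b 1 + a 1*b 2))) = 0 := by linear_combination -E0
    have hZ : a 0 * (q + t * (a 0*(b 2*b 1 + b 1*b 2) - b 0*(a 2*b 1 + a 1*b 2))) + b 0 * (p + t * (a 0*(b 2*a 1 + b 1*a 2) - b 0*(a 2*a 1 + a 1*a 2))) = 0 := by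
      linear_combination -E1
    have hPQ : p + t * (a 0*(b 2*a 1 + b 1*a 2) - b 0*(a 2*a 1 + a 1*a 2)) = 0 ∧ q + t * (a 0*(b 2*b 1 + b 1*b 2) - b 0*(a 2*b 1 + a 1*b 2)) = 0 := by
      rcases hab with ha | hb
      · have h1 : p + t * (a 0*(b 2*a 1 + b 1*a 2) - b 0*(a 2*a 1 + a 1*a 2)) = 0 := (mul_eq_zero.mp hX).resolve_left ha
        refine ⟨h1, ?_⟩
        rw [h1, mul_zero, add_zero] at hZ
        exact (mul_eq_zero.mp hZ).resolve_left ha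
      · have h1 : q + t * (a 0*(b 2*b 1 + b 1*b 2) - b 0*(a 2*b 1 + a 1*b 2)) = 0 := (mul_eq_zero.mp hY).resolve_left hb
        refine ⟨?_, h1⟩
        rw [h1, mul_zero, zero_add] at hZ
        exact (mul_eq_zero.mp hZ).resolve_left hb
    refine ⟨-t, ?_⟩
    rw [comb]
    have e1 : p = -t * (a 0*(b 2*a 1 + b 1*a 2) - b 0*(a 2*a 1 + a 1*a 2)) := by
      linear_combination hPQ.1
    have e2 : q = -t * (a 0*(b 2*b 1 + b 1*b 2) - b 0*(a 2*b 1 + a 1*b 2)) := by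
      linear_combination hPQ.2
    rw [e1, e2]
  · -- reverse direction
    rintro ⟨c, hc⟩
    rw [comb] at hc
    have hP : p = c * (a 0*(b 2*a 1 + b 1*a 2) - b 0*(a 2*a 1 + a 1*a 2)) := by
      have h10 := congrArg (MvPowerSeries.coeff (fs 1 0)) hc
      rwa [linForm_coeff10, linForm_coeff10] at h10
    have hQ : q = c * (a 0*(b 2*b 1 + b 1*b 2) - b 0*(a 2*b 1 + a 1*b 2)) := by
      have h01 := congrArg (MvPowerSeries.coeff (fs 0 1)) hc
      rwa [linForm_coeff01, linForm_coeff01] at h01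
    have hord : ∀ s : Fin 2 →₀ ℕ, s 0 + s 1 < 3 → MvPowerSeries.coeff s
        (f + (c * b 0) • psDeriv 0 g - (c * a 0) • psDeriv 1 g) = 0 := by
      intro s hs
      rw [map_sub, map_add, map_smul, map_smul, smul_eq_mul, smul_eq_mul]
      by_cases h2 : s 0 + s 1 < 2
      · rw [hgu0 s h2, hgv0 s h2, hflow s (by rw [sum_eq]; omega)]
        ring
      · have hs2 : s 0 + s 1 = 2 := by omega
        rw [hgu2 s hs2, hgv2 s hs2, hf2 s hs2, hP, hQ, coeff_quad, coeff_quad, coeff_quad]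
        rcases (by omega : s 0 = 0 ∨ s 0 = 1 ∨ s 0 = 2) with h0 | h0 | h0 <;>
          rw [h0] <;> norm_num <;> ring
    have hmem := hmain _ hord
    have hfeq : f = (f + (c * b 0) • psDeriv 0 g - (c * a 0) • psDeriv 1 g)
        - (c * b 0) • psDeriv 0 g + (c * a 0) • psDeriv 1 g := by abel
    rw [hfeq]
    have m1 : psDeriv 0 g ∈ Ideal.span {psDeriv 0 g, psDeriv 1 g} :=
      Ideal.subset_span (by simp)
    have m2 : psDeriv 1 g ∈ Ideal.span {psDeriv 0 g, psDeriv 1 g} :=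
      Ideal.subset_span (by simp)
    exact add_mem (sub_mem hmem (Submodule.smul_of_tower_mem _ _ m1))
      (Submodule.smul_of_tower_mem _ _ m2)
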